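/- arXiv:1706.10049 — 2 statements merged into one kernel-verified Lean document; each statement's English description precedes it below -/
import Mathlib

section
/- Subdistribution bisimilarity is continuous: if μ_i ∼_d ν_i for all i, μ_i → μ and ν_i → ν setwise (μ_i(A) → μ(A) and ν_i(A) → ν(A) for every measurable A), then μ ∼_d ν. -/
open MeasureTheory ProbabilityTheory Filter

/-- A (sub)distribution: a measure of total mass at most 1. -/
def IsSubdist {S : Type*} [MeasurableSpace S] (μ : Measure S) : Prop :=
  μ Set.univ ≤ 1

/-- A family of sub-Markov transition kernels (labelled Markov process). -/
def IsSubMarkov {S A : Type*} [MeasurableSpace S] (τ : A → Kernel S S) : Prop :=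
  ∀ a s, τ a s Set.univ ≤ 1

/-- One-step transition on subdistributions: μ →^a (step τ a μ). -/
noncomputable def step {S A : Type*} [MeasurableSpace S] (τ : A → Kernel S S)
    (a : A) (μ : Measure S) : Measure S :=
  μ.bind (τ a)

/-- Multi-step transition along a word. -/
noncomputable def wstep {S A : Type*} [MeasurableSpace S] (τ : A → Kernel S S) :
    List A → Measure S → Measure S
  | [], μ => μ
  | a :: w, μ => wstep τ w (step τ a μ)

/-- Subdistribution bisimulation relation. -/
def IsDBisim {S A : Type*} [MeasurableSpace S] (τ : A → Kernel S S)
    (R : Measure S → Measure S → Prop) : Prop :=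
  Symmetric R ∧
  (∀ μ ν, R μ ν → IsSubdist μ ∧ IsSubdist ν) ∧
  ∀ μ ν, R μ ν → μ Set.univ = ν Set.univ ∧ ∀ a, R (step τ a μ) (step τ a ν)

/-- Subdistribution bisimilarity. -/
def DBisim {S A : Type*} [MeasurableSpace S] (τ : A → Kernel S S)
    (μ ν : Measure S) : Prop :=
  ∃ R, IsDBisim τ R ∧ R μ ν

/-- The discounted trace pseudometric `d^c`. -/
noncomputable def dC {S A : Type*} [MeasurableSpace S] (τ : A → Kernel S S)
    (c : ℝ) (μ ν : Measure S) : ℝ :=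
  ⨆ w : List A, c ^ w.length *
    |(wstep τ w μ Set.univ).toReal - (wstep τ w ν Set.univ).toReal|

/-- Setwise convergence of a sequence of (sub)measures. -/
def SetwiseTendsto {S : Type*} [MeasurableSpace S]
    (μs : ℕ → Measure S) (μ : Measure S) : Prop :=
  ∀ B : Set S, MeasurableSet B → Tendsto (fun i => μs i B) atTop (nhds (μ B))


open Set in
lemma tendsto_lintegral_of_setwise {S : Type*} [MeasurableSpace S]
    (μs : ℕ → Measure S) (μ : Measure S)
    (hm : ∀ i, μs i Set.univ ≤ 1)
    (hconv : SetwiseTendsto μs μ) (f : S → ENNReal) (hf : Measurable f)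
    (hb : ∀ s, f s ≤ 1) :
    Tendsto (fun i => ∫⁻ s, f s ∂ μs i) atTop (nhds (∫⁻ s, f s ∂μ)) := by
  set g : S → ℝ := fun s => (f s).toReal with hg
  have hgm : Measurable g := hf.ennreal_toReal
  have hgnn : ∀ s, 0 ≤ g s := fun s => ENNReal.toReal_nonneg
  have hg1 : ∀ s, g s ≤ 1 := fun s => by
    simpa using ENNReal.toReal_mono ENNReal.one_ne_top (hb s)
  have hfg : ∀ s, ENNReal.ofReal (g s) = f s := fun s =>
    ENNReal.ofReal_toReal (lt_of_le_of_lt (hb s) ENNReal.one_lt_top).ne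
  have key : ∀ m : Measure S, ∫⁻ s, f s ∂m = ∫⁻ t in Ioi (0:ℝ), m {a | t < g a} := by
    intro m
    rw [← lintegral_eq_lintegral_meas_lt m (Eventually.of_forall hgnn) hgm.aemeasurable]
    simp_rw [hfg]
  simp_rw [key]
  apply tendsto_lintegral_of_dominated_convergence (Set.indicator (Ioc (0:ℝ) 1) 1)
  · intro i
    apply Antitone.measurable
    intro t t' htt'
    exact measure_mono (fun a ha => lt_of_le_of_lt htt' ha)
  · intro i
    filter_upwards [ae_restrict_mem measurableSet_Ioi] with t ht0
    by_cases ht : t ∈ Ioc (0:ℝ) 1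
    · rw [Set.indicator_of_mem ht]
      exact le_trans (measure_mono (subset_univ _)) (hm i)
    · rw [Set.indicator_of_notMem ht]
      have h1 : 1 < t := by
        simp only [mem_Ioc, not_and, not_le] at ht
        exact ht ht0
      have : {a | t < g a} = ∅ := by
        ext a; simp only [mem_setOf_eq, mem_empty_iff_false, iff_false, not_lt]
        exact (hg1 a).trans h1.le
      simp [this]
  · rw [lintegral_indicator measurableSet_Ioc]
    simp [Real.volume_Ioc]
  · filter_upwards with t
    exact hconv _ (hgm measurableSet_Ioi)

lemma step_apply_aux {S A : Type*} [MeasurableSpace S] (τ : A → Kernel S S) (a : A)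
    (μ : Measure S) {B : Set S} (hB : MeasurableSet B) :
    step τ a μ B = ∫⁻ s, τ a s B ∂μ :=
  Measure.bind_apply hB (τ a).measurable.aemeasurable

lemma step_subdist_aux {S A : Type*} [MeasurableSpace S] (τ : A → Kernel S S)
    (hτ : IsSubMarkov τ) (a : A) (μ : Measure S) (hμ : IsSubdist μ) :
    IsSubdist (step τ a μ) := by
  rw [IsSubdist, step_apply_aux τ a μ MeasurableSet.univ]
  calc ∫⁻ s, τ a s Set.univ ∂μ ≤ ∫⁻ _, 1 ∂μ := lintegral_mono fun s => hτ a s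
    _ = μ Set.univ := by simp
    _ ≤ 1 := hμ

lemma step_setwise_aux {S A : Type*} [MeasurableSpace S] (τ : A → Kernel S S)
    (hτ : IsSubMarkov τ) (a : A) (μs : ℕ → Measure S) (μ : Measure S)
    (hm : ∀ i, μs i Set.univ ≤ 1) (hconv : SetwiseTendsto μs μ) :
    SetwiseTendsto (fun i => step τ a (μs i)) (step τ a μ) := by
  intro B hB
  simp_rw [step_apply_aux τ a _ hB]
  exact tendsto_lintegral_of_setwise μs μ hm hconv (fun s => τ a s B)
    ((τ a).measurable_coe hB)
    (fun s => le_trans (measure_mono (Set.subset_univ _)) (hτ a s))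

/-- Subdistribution bisimilarity is continuous w.r.t. setwise convergence. -/
theorem dbisim_continuous {S A : Type*} [MeasurableSpace S]
    (τ : A → Kernel S S) (hτ : IsSubMarkov τ)
    (μs νs : ℕ → Measure S) (μ ν : Measure S)
    (hsub : ∀ i, IsSubdist (μs i) ∧ IsSubdist (νs i))
    (hμ : IsSubdist μ) (hν : IsSubdist ν)
    (hbis : ∀ i, DBisim τ (μs i) (νs i))
    (hμconv : SetwiseTendsto μs μ) (hνconv : SetwiseTendsto νs ν) :
    DBisim τ μ ν := by
  have dsub : ∀ {p q : Measure S}, DBisim τ p q → IsSubdist p ∧ IsSubdist q := by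
    rintro p q ⟨R0, hR0, hr⟩; exact hR0.2.1 _ _ hr
  have dmass : ∀ {p q : Measure S}, DBisim τ p q → p Set.univ = q Set.univ := by
    rintro p q ⟨R0, hR0, hr⟩; exact (hR0.2.2 _ _ hr).1
  have dstep : ∀ {p q : Measure S} (a : A), DBisim τ p q →
      DBisim τ (step τ a p) (step τ a q) := by
    rintro p q a ⟨R0, hR0, hr⟩; exact ⟨R0, hR0, (hR0.2.2 _ _ hr).2 a⟩
  set R : Measure S → Measure S → Prop := fun p q =>
    IsSubdist p ∧ IsSubdist q ∧
    ∃ ps qs : ℕ → Measure S, (∀ i, DBisim τ (ps i) (qs i)) ∧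
      SetwiseTendsto ps p ∧ SetwiseTendsto qs q with hR
  refine ⟨R, ⟨?_, ?_, ?_⟩, hμ, hν, μs, νs, hbis, hμconv, hνconv⟩
  · rintro p q ⟨hp, hq, ps, qs, hb, hc1, hc2⟩
    refine ⟨hq, hp, qs, ps, ?_, hc2, hc1⟩
    intro i
    obtain ⟨R0, hR0, hr⟩ := hb i
    exact ⟨R0, hR0, hR0.1 hr⟩
  · rintro p q ⟨hp, hq, -⟩; exact ⟨hp, hq⟩
  · rintro p q ⟨hp, hq, ps, qs, hb, hc1, hc2⟩
    constructor
    · have h1 := hc1 Set.univ MeasurableSet.univ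
      have h2 := hc2 Set.univ MeasurableSet.univ
      have : (fun i => ps i Set.univ) = fun i => qs i Set.univ :=
        funext fun i => dmass (hb i)
      rw [this] at h1
      exact tendsto_nhds_unique h1 h2
    · intro a
      refine ⟨step_subdist_aux τ hτ a p hp, step_subdist_aux τ hτ a q hq,
        fun i => step τ a (ps i), fun i => step τ a (qs i),
        fun i => dstep a (hb i),
        step_setwise_aux τ hτ a ps p (fun i => (dsub (hb i)).1) hc1,
        step_setwise_aux τ hτ a qs q (fun i => (dsub (hb i)).2) hc2⟩
end

section
/- If d^c(π₁, π₁') ≤ ε₁ and d^c(π₂, π₂') ≤ ε₂ with ε₁, ε₂ ∈ [0,1], then the product (parallel composition) satisfies d^c(π₁ × π₂, π₁' × π₂') ≤ ε₁ + ε₂ − ε₁ε₂, where the product LMP has transitions τ_a((s₁,s₂), ·) = τ_a¹(s₁,·) × τ_a²(s₂,·). -/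
open MeasureTheory ProbabilityTheory Filter

/-- The product (parallel composition) kernel of two labelled Markov processes. -/
noncomputable def prodKernel {S₁ S₂ A : Type*} [MeasurableSpace S₁] [MeasurableSpace S₂]
    (τ₁ : A → Kernel S₁ S₁) (τ₂ : A → Kernel S₂ S₂)
    [∀ a, IsSFiniteKernel (τ₁ a)] [∀ a, IsSFiniteKernel (τ₂ a)] :
    A → Kernel (S₁ × S₂) (S₁ × S₂) :=
  fun a => ((τ₁ a).comap Prod.fst measurable_fst).prod ((τ₂ a).comap Prod.snd measurable_snd)

-- mass of step
lemma step_mass_le {S A : Type*} [MeasurableSpace S] {τ : A → Kernel S S}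
    (hτ : IsSubMarkov τ) (a : A) (μ : Measure S) :
    step τ a μ Set.univ ≤ μ Set.univ := by
  rw [step, Measure.bind_apply MeasurableSet.univ (Kernel.measurable (τ a)).aemeasurable]
  calc ∫⁻ s, τ a s Set.univ ∂μ ≤ ∫⁻ _, 1 ∂μ := lintegral_mono fun s => hτ a s
    _ = μ Set.univ := by simp

lemma wstep_mass_le {S A : Type*} [MeasurableSpace S] {τ : A → Kernel S S}
    (hτ : IsSubMarkov τ) (w : List A) (μ : Measure S) :
    wstep τ w μ Set.univ ≤ μ Set.univ := by
  induction w generalizing μ with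
  | nil => exact le_rfl
  | cons a w ih => exact (ih _).trans (step_mass_le hτ a μ)

lemma isFiniteMeasure_of_mass_le_one {S : Type*} [MeasurableSpace S] {μ : Measure S}
    (h : μ Set.univ ≤ 1) : IsFiniteMeasure μ :=
  ⟨lt_of_le_of_lt h ENNReal.one_lt_top⟩

lemma step_prod {S₁ S₂ A : Type*} [MeasurableSpace S₁] [MeasurableSpace S₂]
    (τ₁ : A → Kernel S₁ S₁) (τ₂ : A → Kernel S₂ S₂)
    [∀ a, IsSFiniteKernel (τ₁ a)] [∀ a, IsSFiniteKernel (τ₂ a)]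
    (hτ₁ : IsSubMarkov τ₁) (hτ₂ : IsSubMarkov τ₂) (a : A)
    (μ : Measure S₁) (ν : Measure S₂) (hμ : μ Set.univ ≤ 1) (hν : ν Set.univ ≤ 1) :
    step (prodKernel τ₁ τ₂) a (μ.prod ν) = (step τ₁ a μ).prod (step τ₂ a ν) := by
  haveI := isFiniteMeasure_of_mass_le_one hμ
  haveI := isFiniteMeasure_of_mass_le_one hν
  haveI := isFiniteMeasure_of_mass_le_one ((step_mass_le hτ₁ a μ).trans hμ)
  haveI := isFiniteMeasure_of_mass_le_one ((step_mass_le hτ₂ a ν).trans hν)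
  refine (Measure.prod_eq fun s t hs ht => ?_).symm
  rw [step, Measure.bind_apply (hs.prod ht) (Kernel.measurable _).aemeasurable]
  have : ∀ p : S₁ × S₂, prodKernel τ₁ τ₂ a p (s ×ˢ t) = τ₁ a p.1 s * τ₂ a p.2 t := by
    intro p
    rw [prodKernel, Kernel.prod_apply, Kernel.comap_apply, Kernel.comap_apply,
      Measure.prod_prod]
  simp_rw [this]
  rw [lintegral_prod_mul
      ((Kernel.measurable_coe (τ₁ a) hs).aemeasurable)
      ((Kernel.measurable_coe (τ₂ a) ht).aemeasurable),
    step, step, Measure.bind_apply hs (Kernel.measurable _).aemeasurable,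
    Measure.bind_apply ht (Kernel.measurable _).aemeasurable]

lemma wstep_prod {S₁ S₂ A : Type*} [MeasurableSpace S₁] [MeasurableSpace S₂]
    (τ₁ : A → Kernel S₁ S₁) (τ₂ : A → Kernel S₂ S₂)
    [∀ a, IsSFiniteKernel (τ₁ a)] [∀ a, IsSFiniteKernel (τ₂ a)]
    (hτ₁ : IsSubMarkov τ₁) (hτ₂ : IsSubMarkov τ₂) (w : List A)
    (μ : Measure S₁) (ν : Measure S₂) (hμ : μ Set.univ ≤ 1) (hν : ν Set.univ ≤ 1) :
    wstep (prodKernel τ₁ τ₂) w (μ.prod ν) = (wstep τ₁ w μ).prod (wstep τ₂ w ν) := by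
  induction w generalizing μ ν with
  | nil => rfl
  | cons a w ih =>
    show wstep (prodKernel τ₁ τ₂) w (step (prodKernel τ₁ τ₂) a (μ.prod ν)) = _
    rw [step_prod τ₁ τ₂ hτ₁ hτ₂ a μ ν hμ hν]
    exact ih _ _ ((step_mass_le hτ₁ a μ).trans hμ) ((step_mass_le hτ₂ a ν).trans hν)

-- arithmetic key lemma
lemma key_ineq (t p₁ p₁' p₂ p₂' ε₁ ε₂ : ℝ)
    (ht0 : 0 < t) (ht1 : t ≤ 1)
    (hp₁ : p₁ ∈ Set.Icc (0:ℝ) 1) (hp₁' : p₁' ∈ Set.Icc (0:ℝ) 1)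
    (hp₂ : p₂ ∈ Set.Icc (0:ℝ) 1) (hp₂' : p₂' ∈ Set.Icc (0:ℝ) 1)
    (he₁ : ε₁ ≤ 1) (he₂ : ε₂ ≤ 1)
    (h1 : t * |p₁ - p₁'| ≤ ε₁) (h2 : t * |p₂ - p₂'| ≤ ε₂) :
    t * |p₁ * p₂ - p₁' * p₂'| ≤ ε₁ + ε₂ - ε₁ * ε₂ := by
  obtain ⟨hp₁0, hp₁1⟩ := hp₁
  obtain ⟨hp₁'0, hp₁'1⟩ := hp₁'
  obtain ⟨hp₂0, hp₂1⟩ := hp₂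
  obtain ⟨hp₂'0, hp₂'1⟩ := hp₂'
  have hd₁ := abs_nonneg (p₁ - p₁')
  have hd₂ := abs_nonneg (p₂ - p₂')
  have hd₁' : |p₁ - p₁'| ≤ 1 := by
    rw [abs_sub_le_iff]; constructor <;> linarith
  have hd₂' : |p₂ - p₂'| ≤ 1 := by
    rw [abs_sub_le_iff]; constructor <;> linarith
  have h₁l : -(|p₁ - p₁'|) ≤ p₁ - p₁' := neg_abs_le _
  have h₁u : p₁ - p₁' ≤ |p₁ - p₁'| := le_abs_self _
  have h₂l : -(|p₂ - p₂'|) ≤ p₂ - p₂' := neg_abs_le _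
  have h₂u : p₂ - p₂' ≤ |p₂ - p₂'| := le_abs_self _
  -- step 1: |p₁p₂ - p₁'p₂'| ≤ d₁ + d₂ - d₁ d₂
  set d₁ := |p₁ - p₁'| with hd1def
  set d₂ := |p₂ - p₂'| with hd2def
  have hstep1 : |p₁ * p₂ - p₁' * p₂'| ≤ d₁ + d₂ - d₁ * d₂ := by
    rw [abs_le]
    constructor <;> nlinarith [mul_nonneg hd₁ hd₂, mul_nonneg hp₁0 hp₂0,
      mul_nonneg hp₁'0 hp₂'0, mul_le_one₀ hd₁' hd₂ hd₂']
  -- step 2: t * (d₁ + d₂ - d₁ d₂) ≤ ε₁ + ε₂ - ε₁ ε₂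
  have he₁0 : 0 ≤ ε₁ := le_trans (by positivity) h1
  have he₂0 : 0 ≤ ε₂ := le_trans (by positivity) h2
  have htd₂ : t * d₂ ≤ 1 := le_trans (mul_le_one₀ ht1 hd₂ hd₂') le_rfl
  calc t * |p₁ * p₂ - p₁' * p₂'| ≤ t * (d₁ + d₂ - d₁ * d₂) := by
        exact mul_le_mul_of_nonneg_left hstep1 ht0.le
    _ ≤ (t * d₁) + (t * d₂) - (t * d₁) * (t * d₂) := by
        nlinarith [mul_nonneg (mul_nonneg (mul_nonneg ht0.le hd₁) hd₂) (sub_nonneg.mpr ht1)]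
    _ ≤ ε₁ + ε₂ - ε₁ * ε₂ := by
        nlinarith [mul_nonneg (mul_nonneg ht0.le hd₁) (sub_nonneg.mpr he₂), mul_nonneg he₂0 (sub_nonneg.mpr he₁), sub_nonneg.mpr htd₂, mul_le_mul h1 (le_refl (1:ℝ)) zero_le_one he₁0]

lemma wstep_toReal_mem {S A : Type*} [MeasurableSpace S] {τ : A → Kernel S S}
    (hτ : IsSubMarkov τ) (w : List A) (μ : Measure S) (hμ : μ Set.univ ≤ 1) :
    (wstep τ w μ Set.univ).toReal ∈ Set.Icc (0:ℝ) 1 := by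
  refine ⟨ENNReal.toReal_nonneg, ?_⟩
  have h := (wstep_mass_le hτ w μ).trans hμ
  have := ENNReal.toReal_mono (by simp) h
  simpa using this

lemma term_le_one {S A : Type*} [MeasurableSpace S] {τ : A → Kernel S S}
    (hτ : IsSubMarkov τ) {c : ℝ} (hc0 : 0 < c) (hc1 : c ≤ 1)
    (μ ν : Measure S) (hμ : μ Set.univ ≤ 1) (hν : ν Set.univ ≤ 1) (w : List A) :
    c ^ w.length *
      |(wstep τ w μ Set.univ).toReal - (wstep τ w ν Set.univ).toReal| ≤ 1 := by
  obtain ⟨ha0, ha1⟩ := wstep_toReal_mem hτ w μ hμ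
  obtain ⟨hb0, hb1⟩ := wstep_toReal_mem hτ w ν hν
  have habs : |(wstep τ w μ Set.univ).toReal - (wstep τ w ν Set.univ).toReal| ≤ 1 := by
    rw [abs_sub_le_iff]; constructor <;> linarith
  calc _ ≤ 1 * 1 := mul_le_mul (pow_le_one₀ hc0.le hc1) habs (abs_nonneg _) zero_le_one
    _ = 1 := one_mul 1


/-- Compositionality: approximate bisimilarity of components bounds the distance of
the composed processes by ε₁ + ε₂ − ε₁ε₂. -/
theorem dC_compositional {S₁ S₂ A : Type*} [MeasurableSpace S₁] [MeasurableSpace S₂]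
    (τ₁ : A → Kernel S₁ S₁) (τ₂ : A → Kernel S₂ S₂)
    [∀ a, IsSFiniteKernel (τ₁ a)] [∀ a, IsSFiniteKernel (τ₂ a)]
    (hτ₁ : IsSubMarkov τ₁) (hτ₂ : IsSubMarkov τ₂)
    (c : ℝ) (hc : c ∈ Set.Ioc (0:ℝ) 1)
    (π₁ π₁' : Measure S₁) (π₂ π₂' : Measure S₂)
    [SFinite π₂] [SFinite π₂']
    (hπ₁ : IsSubdist π₁) (hπ₁' : IsSubdist π₁')
    (hπ₂ : IsSubdist π₂) (hπ₂' : IsSubdist π₂')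
    (ε₁ ε₂ : ℝ) (hε₁ : ε₁ ∈ Set.Icc (0:ℝ) 1) (hε₂ : ε₂ ∈ Set.Icc (0:ℝ) 1)
    (h₁ : dC τ₁ c π₁ π₁' ≤ ε₁) (h₂ : dC τ₂ c π₂ π₂' ≤ ε₂) :
    dC (prodKernel τ₁ τ₂) c (π₁.prod π₂) (π₁'.prod π₂') ≤ ε₁ + ε₂ - ε₁ * ε₂ := by
  obtain ⟨hc0, hc1⟩ := hc
  have hpow : ∀ n : ℕ, 0 < c ^ n ∧ c ^ n ≤ 1 := fun n =>
    ⟨pow_pos hc0 n, pow_le_one₀ hc0.le hc1⟩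
  have bdd₁ : BddAbove (Set.range fun w : List A => c ^ w.length *
      |(wstep τ₁ w π₁ Set.univ).toReal - (wstep τ₁ w π₁' Set.univ).toReal|) :=
    ⟨1, Set.forall_mem_range.mpr (term_le_one hτ₁ hc0 hc1 π₁ π₁' hπ₁ hπ₁')⟩
  have bdd₂ : BddAbove (Set.range fun w : List A => c ^ w.length *
      |(wstep τ₂ w π₂ Set.univ).toReal - (wstep τ₂ w π₂' Set.univ).toReal|) :=
    ⟨1, Set.forall_mem_range.mpr (term_le_one hτ₂ hc0 hc1 π₂ π₂' hπ₂ hπ₂')⟩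
  have key₁ : ∀ w : List A, c ^ w.length *
      |(wstep τ₁ w π₁ Set.univ).toReal - (wstep τ₁ w π₁' Set.univ).toReal| ≤ ε₁ :=
    fun w => (le_ciSup bdd₁ w).trans h₁
  have key₂ : ∀ w : List A, c ^ w.length *
      |(wstep τ₂ w π₂ Set.univ).toReal - (wstep τ₂ w π₂' Set.univ).toReal| ≤ ε₂ :=
    fun w => (le_ciSup bdd₂ w).trans h₂
  rw [dC]
  apply ciSup_le
  intro w
  rw [wstep_prod τ₁ τ₂ hτ₁ hτ₂ w π₁ π₂ hπ₁ hπ₂,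
    wstep_prod τ₁ τ₂ hτ₁ hτ₂ w π₁' π₂' hπ₁' hπ₂']
  haveI := isFiniteMeasure_of_mass_le_one ((wstep_mass_le hτ₂ w π₂).trans hπ₂)
  haveI := isFiniteMeasure_of_mass_le_one ((wstep_mass_le hτ₂ w π₂').trans hπ₂')
  rw [← Set.univ_prod_univ, Measure.prod_prod, Measure.prod_prod,
    ENNReal.toReal_mul, ENNReal.toReal_mul]
  exact key_ineq (c ^ w.length) _ _ _ _ ε₁ ε₂ (hpow w.length).1 (hpow w.length).2
    (wstep_toReal_mem hτ₁ w π₁ hπ₁) (wstep_toReal_mem hτ₁ w π₁' hπ₁')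
    (wstep_toReal_mem hτ₂ w π₂ hπ₂) (wstep_toReal_mem hτ₂ w π₂' hπ₂')
    hε₁.2 hε₂.2 (key₁ w) (key₂ w)
end
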